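/- arXiv:2312.17478 — 2 statements merged into one kernel-verified Lean document; each statement's English description precedes it below -/
import Mathlib

section
/- (Dissipativity of the AVF scheme) Let N̄ be a symmetric negative semi-definite N×N real matrix and E : ℝ^N → ℝ continuously differentiable. Suppose α, β ∈ ℝ^N and Δt > 0 satisfy the AVF update (β − α)/Δt = N̄ ∫₀¹ ∇E((1−ξ)α + ξβ) dξ. Then E(β) ≤ E(α). -/
open Matrix RealInnerProductSpace

set_option maxHeartbeats 1000000

/-- Dissipativity of the AVF scheme: if `N̄` is symmetric negative semi-definite,
`E` is `C¹`, and `(β − α)/Δt = N̄ ∫₀¹ ∇E((1−ξ)α + ξβ) dξ`, then `E(β) ≤ E(α)`. -/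
theorem stmt_6 {N : ℕ} (Nbar : Matrix (Fin N) (Fin N) ℝ)
    (hsym : Nbar.IsSymm)
    (hneg : ∀ x : Fin N → ℝ, x ⬝ᵥ (Nbar *ᵥ x) ≤ 0)
    (E : EuclideanSpace ℝ (Fin N) → ℝ) (hE : ContDiff ℝ 1 E)
    (α β : EuclideanSpace ℝ (Fin N)) (Δt : ℝ) (hΔt : 0 < Δt)
    (hupdate : (Δt)⁻¹ • (β - α) =
      Matrix.toEuclideanLin Nbar
        (∫ ξ in (0:ℝ)..1, gradient E ((1 - ξ) • α + ξ • β))) :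
    E β ≤ E α := by
  set γ : ℝ → EuclideanSpace ℝ (Fin N) := fun ξ => (1 - ξ) • α + ξ • β with hγ
  set v : EuclideanSpace ℝ (Fin N) := ∫ ξ in (0:ℝ)..1, gradient E (γ ξ) with hv
  have hEdiff : Differentiable ℝ E := hE.differentiable one_ne_zero
  have hγc : Continuous γ := by fun_prop
  -- continuity of the gradient
  have hgradc : Continuous (gradient E) := by
    have : Continuous (fderiv ℝ E) := hE.continuous_fderiv one_ne_zero
    exact ((InnerProductSpace.toDual ℝ (EuclideanSpace ℝ (Fin N))).symm.continuous).comp this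
  have hcont : Continuous fun ξ => gradient E (γ ξ) := hgradc.comp hγc
  have hint : IntervalIntegrable (fun ξ => gradient E (γ ξ)) MeasureTheory.volume 0 1 :=
    hcont.intervalIntegrable 0 1
  -- derivative of the line
  have hγd : ∀ ξ : ℝ, HasDerivAt γ (β - α) ξ := by
    intro ξ
    have h1 : γ = fun ξ : ℝ => α + ξ • (β - α) := by
      funext t; simp only [hγ]; module
    rw [h1]
    simpa using ((hasDerivAt_id ξ).smul_const (β - α)).const_add α
  -- FTC
  have hderiv : ∀ ξ ∈ Set.uIcc (0:ℝ) 1,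
      HasDerivAt (fun t => E (γ t)) ⟪gradient E (γ ξ), β - α⟫ ξ := by
    intro ξ _
    have hg : HasGradientAt E (gradient E (γ ξ)) (γ ξ) :=
      (hEdiff (γ ξ)).hasGradientAt
    have hf : HasFDerivAt E (InnerProductSpace.toDual ℝ _ (gradient E (γ ξ))) (γ ξ) :=
      hasGradientAt_iff_hasFDerivAt.mp hg
    have := hf.comp_hasDerivAt ξ (hγd ξ)
    simpa only [InnerProductSpace.toDual_apply_apply, Function.comp_def] using this
  have hintderiv : IntervalIntegrable (fun ξ => ⟪gradient E (γ ξ), β - α⟫)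
      MeasureTheory.volume 0 1 := by
    apply Continuous.intervalIntegrable
    exact (continuous_inner.comp (hcont.prodMk continuous_const))
  have hftc : ∫ ξ in (0:ℝ)..1, ⟪gradient E (γ ξ), β - α⟫ = E (γ 1) - E (γ 0) :=
    intervalIntegral.integral_eq_sub_of_hasDerivAt hderiv hintderiv
  have hγ0 : γ 0 = α := by simp [hγ]
  have hγ1 : γ 1 = β := by simp [hγ]
  -- pull inner out of the integral
  have hswap : ∫ ξ in (0:ℝ)..1, ⟪gradient E (γ ξ), β - α⟫ = ⟪v, β - α⟫ := by
    have := (innerSL ℝ (β - α)).intervalIntegral_comp_comm hint (a := 0) (b := 1)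
    simp only [innerSL_apply_apply] at this
    calc ∫ ξ in (0:ℝ)..1, ⟪gradient E (γ ξ), β - α⟫
        = ∫ ξ in (0:ℝ)..1, ⟪β - α, gradient E (γ ξ)⟫ := by
          simp_rw [real_inner_comm]
      _ = ⟪β - α, v⟫ := this
      _ = ⟪v, β - α⟫ := real_inner_comm _ _
  -- rewrite β - α using the update
  have hba : β - α = Δt • Matrix.toEuclideanLin Nbar v := by
    rw [← hupdate, smul_smul, mul_inv_cancel₀ hΔt.ne', one_smul]
  have hkey : ⟪v, β - α⟫ ≤ 0 := by
    rw [hba, real_inner_smul_right]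
    have hvv : ⟪v, Matrix.toEuclideanLin Nbar v⟫ ≤ 0 := by
      have : ⟪v, Matrix.toEuclideanLin Nbar v⟫ =
          (⇑v : Fin N → ℝ) ⬝ᵥ (Nbar *ᵥ ⇑v) := by
        simp [PiLp.inner_apply, Matrix.toEuclideanLin_apply, dotProduct, mulVec]
        exact Finset.sum_congr rfl fun _ _ => mul_comm _ _
      rw [this]
      exact hneg _
    exact mul_nonpos_of_nonneg_of_nonpos hΔt.le hvv
  have : E β - E α ≤ 0 := by
    rw [← hγ1, ← hγ0, ← hftc, hswap]; exact hkey
  linarith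
end

section
/- Let f : ℝ → ℝ be Lipschitz with constant L and let y : [0,T] → ℝ satisfy the AVF fixed-point relation y^{n+1} = y^n + Δt ∫₀¹ f((1−ξ)y^n + ξ y^{n+1}) dξ. If Δt·L < 2, then for fixed y^n the map Φ(z) = y^n + Δt ∫₀¹ f((1−ξ)y^n + ξ z) dξ is a contraction on ℝ with constant Δt·L/2, and hence y^{n+1} exists and is unique. -/
/-- Contraction property and unique solvability of the AVF fixed-point map
`Φ(z) = yⁿ + Δt ∫₀¹ f((1−ξ)yⁿ + ξz) dξ` when `Δt·L < 2`. -/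
theorem stmt_16 (f : ℝ → ℝ) (L : ℝ) (hL : 0 ≤ L)
    (hf : ∀ x y : ℝ, |f x - f y| ≤ L * |x - y|)
    (Δt : ℝ) (hΔt : 0 < Δt) (hcontr : Δt * L < 2)
    (yn : ℝ) (Φ : ℝ → ℝ)
    (hΦ : ∀ z, Φ z = yn + Δt * ∫ ξ in (0:ℝ)..1, f ((1 - ξ) * yn + ξ * z)) :
    (∀ z₁ z₂ : ℝ, |Φ z₁ - Φ z₂| ≤ (Δt * L / 2) * |z₁ - z₂|) ∧
      ∃! z : ℝ, Φ z = z := by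
  have hlip : LipschitzWith ⟨L, hL⟩ f := by
    apply LipschitzWith.of_dist_le_mul
    intro x y
    rw [Real.dist_eq, Real.dist_eq]; exact hf x y
  have hcf : Continuous f := hlip.continuous
  have hcont : ∀ z, Continuous (fun ξ : ℝ => f ((1 - ξ) * yn + ξ * z)) := by
    intro z; exact hcf.comp (by continuity)
  have key : ∀ z₁ z₂ : ℝ, |Φ z₁ - Φ z₂| ≤ (Δt * L / 2) * |z₁ - z₂| := by
    intro z₁ z₂
    have hi1 : IntervalIntegrable (fun ξ : ℝ => f ((1 - ξ) * yn + ξ * z₁)) MeasureTheory.volume 0 1 :=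
      (hcont z₁).intervalIntegrable _ _
    have hi2 : IntervalIntegrable (fun ξ : ℝ => f ((1 - ξ) * yn + ξ * z₂)) MeasureTheory.volume 0 1 :=
      (hcont z₂).intervalIntegrable _ _
    have hsub : Φ z₁ - Φ z₂ = Δt * ∫ ξ in (0:ℝ)..1,
        (f ((1 - ξ) * yn + ξ * z₁) - f ((1 - ξ) * yn + ξ * z₂)) := by
      rw [hΦ, hΦ, intervalIntegral.integral_sub hi1 hi2]; ring
    rw [hsub, abs_mul, abs_of_pos hΔt]
    have hbound : |∫ ξ in (0:ℝ)..1,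
        (f ((1 - ξ) * yn + ξ * z₁) - f ((1 - ξ) * yn + ξ * z₂))| ≤ (L / 2) * |z₁ - z₂| := by
      have h1 : |∫ ξ in (0:ℝ)..1,
          (f ((1 - ξ) * yn + ξ * z₁) - f ((1 - ξ) * yn + ξ * z₂))| ≤
          ∫ ξ in (0:ℝ)..1, L * ξ * |z₁ - z₂| := by
        apply intervalIntegral.abs_integral_le_integral_abs (by norm_num) |>.trans
        apply intervalIntegral.integral_mono_on (by norm_num)
        · exact ((hcont z₁).sub (hcont z₂)).abs.intervalIntegrable _ _
        · exact (by continuity : Continuous fun ξ : ℝ => L * ξ * |z₁ - z₂|).intervalIntegrable _ _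
        · intro ξ hξ
          have := hf ((1 - ξ) * yn + ξ * z₁) ((1 - ξ) * yn + ξ * z₂)
          have harg : (1 - ξ) * yn + ξ * z₁ - ((1 - ξ) * yn + ξ * z₂) = ξ * (z₁ - z₂) := by ring
          rw [harg, abs_mul, abs_of_nonneg hξ.1] at this
          linarith [this]
      have h2 : ∫ ξ in (0:ℝ)..1, L * ξ * |z₁ - z₂| = (L / 2) * |z₁ - z₂| := by
        have : (fun ξ : ℝ => L * ξ * |z₁ - z₂|) = fun ξ : ℝ => (L * |z₁ - z₂|) * ξ := by
          funext ξ; ring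
        rw [this, intervalIntegral.integral_const_mul, integral_id]
        ring
      linarith [h1, h2 ▸ h1]
    calc Δt * |∫ ξ in (0:ℝ)..1, (f ((1 - ξ) * yn + ξ * z₁) - f ((1 - ξ) * yn + ξ * z₂))|
        ≤ Δt * ((L / 2) * |z₁ - z₂|) := by
          exact mul_le_mul_of_nonneg_left hbound hΔt.le
      _ = (Δt * L / 2) * |z₁ - z₂| := by ring
  refine ⟨key, ?_⟩
  have hk0 : (0:ℝ) ≤ Δt * L / 2 := by positivity
  have hk1 : Δt * L / 2 < 1 := by linarith
  have hΦlip : LipschitzWith ⟨Δt * L / 2, hk0⟩ Φ := by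
    apply LipschitzWith.of_dist_le_mul
    intro x y
    rw [Real.dist_eq, Real.dist_eq]; exact key x y
  have hC : ContractingWith ⟨Δt * L / 2, hk0⟩ Φ := ⟨by exact_mod_cast hk1, hΦlip⟩
  refine ⟨hC.fixedPoint Φ, hC.fixedPoint_isFixedPt, ?_⟩
  intro z hz
  exact hC.fixedPoint_unique hz
end
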